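/- The set of clauses { ⊢ α ≤ α ; ⊢ α ≤ g(α) ; i = f(α), i = f(g(α)) ⊢ (for each i ≤ n) ; f(α) < 0 ⊢ ; 0 ≤ α ⊢ f(α) < n, f(α) = n ; f(α) < i+1, α ≤ β ⊢ f(β) < i, i = f(β) (for each i) } is unsatisfiable over ℕ, i.e., there exist no f, g : ℕ → ℕ making all clauses true. -/
import Mathlib

theorem eca_clause_set_unsat (n : ℕ) :
    ¬ ∃ f g : ℕ → ℕ,
      (∀ α : ℕ, α ≤ α) ∧
      (∀ α : ℕ, α ≤ g α) ∧
      (∀ i ≤ n, ∀ α, i = f α → i = f (g α) → False) ∧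
      (∀ α, f α < 0 → False) ∧
      (∀ α : ℕ, 0 ≤ α → f α < n ∨ f α = n) ∧
      (∀ i α β, f α < i + 1 → α ≤ β → f β < i ∨ i = f β) := by
  rintro ⟨f, g, _, h2, h3, _, h5, h6⟩
  have key : ∀ α, f α ≤ n := fun α => (h5 α (Nat.zero_le _)).elim Nat.le_of_lt Nat.le_of_eq
  have step : ∀ α, f (g α) < f α := by
    intro α
    have hle : f (g α) ≤ f α := by
      rcases h6 (f α) α (g α) (Nat.lt_succ_self _) (h2 α) with h | h
      · exact le_of_lt h
      · exact le_of_eq h.symm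
    exact lt_of_le_of_ne hle (fun h => h3 (f α) (key α) α rfl h.symm)
  have desc : ∀ m α, f α ≤ m → False := by
    intro m
    induction m with
    | zero => intro α hα; have := step α; omega
    | succ k ih => intro α hα; exact ih (g α) (by have := step α; omega)
  exact desc (f 0) 0 le_rfl
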